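/- Let k, r be integers with 2 ≤ 2r ≤ k ≤ n + r, let S and T be 𝔽_q-subspaces of 𝔽_{q^n} with dim_{𝔽_q}(S) = n − k + r and dim_{𝔽_q}(T) = r, and let U = S^⊥ × T ⊆ 𝔽_{q^n}². Then (S, T) is a critical pair, i.e., dim_{𝔽_q}(⟨ST⟩_{𝔽_q}) = n − k + 2r − 1, if and only if the number of points of weight r in L_U different from ⟨(1,0)⟩_{𝔽_{q^n}} is exactly q^{k−2r+1}. -/

import Mathlib

open Submodule

/-- The span `⟨1, μ, …, μ^{m-1}⟩_{F_q}`. -/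
noncomputable def pows (Fq : Type*) {Fqn : Type*} [Field Fq] [Field Fqn] [Algebra Fq Fqn]
    (μ : Fqn) (m : ℕ) : Submodule Fq Fqn :=
  Submodule.span Fq (Set.range fun i : Fin m => μ ^ (i : ℕ))

/-- Multiplication of a subspace by a scalar: `b · W`. -/
noncomputable def bmul (Fq : Type*) {Fqn : Type*} [Field Fq] [Field Fqn] [Algebra Fq Fqn]
    (b : Fqn) (W : Submodule Fq Fqn) : Submodule Fq Fqn :=
  W.map (LinearMap.mulLeft Fq b)

/-- The `F_q`-linear set in `PG(1, q^n)` defined by an `F_q`-subspace `U` of `F_{q^n}²`: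
the set of projective points `⟨v⟩_{F_{q^n}}`, `v ∈ U \ {0}`, viewed as
one-dimensional `F_{q^n}`-subspaces of `F_{q^n}²`. -/
def linSet {Fq Fqn : Type*} [Field Fq] [Field Fqn] [Algebra Fq Fqn]
    (U : Submodule Fq (Fqn × Fqn)) : Set (Submodule Fqn (Fqn × Fqn)) :=
  {P | ∃ v : Fqn × Fqn, v ≠ 0 ∧ v ∈ U ∧ P = Submodule.span Fqn {v}}

/-- The weight of a projective point `P` in the linear set defined by `U`:
`w_{L_U}(P) = dim_{F_q}(U ∩ P)`. -/
noncomputable def weight {Fq Fqn : Type*} [Field Fq] [Field Fqn] [Algebra Fq Fqn]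
    (U : Submodule Fq (Fqn × Fqn)) (P : Submodule Fqn (Fqn × Fqn)) : ℕ :=
  Module.finrank Fq ↥(U ⊓ P.restrictScalars Fq)

open Pointwise

/-- The orthogonal complement with respect to the trace bilinear form. -/
noncomputable def perp (Fq : Type*) {Fqn : Type*} [Field Fq] [Field Fqn] [Algebra Fq Fqn]
    (S : Submodule Fq Fqn) : Submodule Fq Fqn where
  carrier := {a | ∀ b ∈ S, Algebra.trace Fq Fqn (a * b) = 0}
  add_mem' := by
    intro a a' ha ha' b hb
    rw [add_mul, map_add, ha b hb, ha' b hb, add_zero]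
  zero_mem' := by
    intro b hb
    rw [zero_mul, map_zero]
  smul_mem' := by
    intro c a ha b hb
    rw [smul_mul_assoc, map_smul, ha b hb, smul_zero]

lemma mem_perp_iff {Fq Fqn : Type*} [Field Fq] [Field Fqn] [Algebra Fq Fqn]
    {X : Submodule Fq Fqn} {a : Fqn} :
    a ∈ perp Fq X ↔ ∀ b ∈ X, Algebra.trace Fq Fqn (a * b) = 0 := Iff.rfl

/-- Let `2 ≤ 2r ≤ k ≤ n + r`, `S` and `T` `F_q`-subspaces of `F_{q^n}`
of dimensions `n - k + r` and `r`, and `U = S^⊥ × T`. Then `(S,T)` is a critical pair,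
i.e. `dim_{F_q}⟨ST⟩_{F_q} = n - k + 2r - 1` (stated as `dim + k + 1 = n + 2r`), iff the
number of points of weight `r` in `L_U` different from `⟨(1,0)⟩` is exactly
`q^{k-2r+1}`. -/
theorem stmt19 (Fq Fqn : Type*) [Field Fq] [Field Fqn] [Algebra Fq Fqn] [Fintype Fq]
    (q n : ℕ) (hq : Fintype.card Fq = q) (hn : Module.finrank Fq Fqn = n)
    (k r : ℕ) (hr : 1 ≤ r) (hrk : 2 * r ≤ k) (hkn : k ≤ n + r)
    (S : Submodule Fq Fqn) (hS : Module.finrank Fq ↥S = n + r - k)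
    (T : Submodule Fq Fqn) (hT : Module.finrank Fq ↥T = r)
    (U : Submodule Fq (Fqn × Fqn)) (hU : U = (perp Fq S).prod T) :
    Module.finrank Fq ↥(Submodule.span Fq ((S : Set Fqn) * (T : Set Fqn))) + k + 1
        = n + 2 * r ↔
      Set.ncard
          {P | P ∈ linSet U ∧ weight U P = r ∧
            P ≠ Submodule.span Fqn {((1 : Fqn), (0 : Fqn))}}
        = q ^ (k - 2 * r + 1) := by
  classical
  subst hU hq
  haveI : FiniteDimensional Fq Fqn := FiniteDimensional.of_finrank_pos (by omega)
  haveI : Finite Fqn := Module.finite_of_finite Fq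
  haveI : Algebra.IsAlgebraic Fq Fqn := Algebra.IsAlgebraic.of_finite Fq Fqn
  have hnd := traceForm_nondegenerate Fq Fqn
  have hrefl : (Algebra.traceForm Fq Fqn).IsRefl := fun x y h => by
    rw [Algebra.traceForm_apply] at h ⊢; rwa [mul_comm]
  set W : Submodule Fq Fqn := Submodule.span Fq ((S : Set Fqn) * (T : Set Fqn)) with hWdef
  -- perp equals bilinear-form orthogonal complement
  have hperp : perp Fq W = (Algebra.traceForm Fq Fqn).orthogonal W := by
    ext a
    rw [mem_perp_iff, LinearMap.BilinForm.mem_orthogonal_iff]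
    constructor
    · intro h b hb
      have := h b hb
      rw [Algebra.traceForm_apply, mul_comm]
      exact this
    · intro h b hb
      have := h b hb
      rw [Algebra.traceForm_apply, mul_comm] at this
      exact this
  -- membership in perp W in terms of S and T
  have hWmem : ∀ a : Fqn, a ∈ perp Fq W ↔
      ∀ t ∈ T, ∀ s ∈ S, Algebra.trace Fq Fqn (a * t * s) = 0 := by
    intro a
    rw [mem_perp_iff]
    constructor
    · intro h t ht s hs
      have hmem : s * t ∈ (S : Set Fqn) * (T : Set Fqn) := Set.mul_mem_mul hs ht
      have := h _ (Submodule.subset_span hmem)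
      rw [show a * (s * t) = a * t * s by ring] at this
      exact this
    · intro h b hb
      set g : Fqn →ₗ[Fq] Fq :=
        (Algebra.trace Fq Fqn).comp (LinearMap.mulLeft Fq a) with hg
      have hker : W ≤ LinearMap.ker g := by
        rw [hWdef, Submodule.span_le]
        rintro x hx
        obtain ⟨s, hs, t, ht, rfl⟩ := hx
        have := h t ht s hs
        simp only [SetLike.mem_coe, LinearMap.mem_ker, hg, LinearMap.comp_apply,
          LinearMap.mulLeft_apply]
        rw [show a * (s * t) = a * t * s by ring]
        exact this
      have := hker hb
      simpa [hg] using this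
  -- the weight of ⟨(a,1)⟩
  have hweight : ∀ a : Fqn,
      weight ((perp Fq S).prod T) (Submodule.span Fqn {(a, (1 : Fqn))}) =
        Module.finrank Fq
          ↥(T ⊓ Submodule.comap (LinearMap.mulLeft Fq a) (perp Fq S)) := by
    intro a
    set f : Fqn →ₗ[Fq] Fqn × Fqn := (LinearMap.mulLeft Fq a).prod LinearMap.id with hf
    have hfinj : Function.Injective f := fun x y h => congrArg Prod.snd h
    have him : (perp Fq S).prod T ⊓
        (Submodule.span Fqn {(a, (1 : Fqn))}).restrictScalars Fq
        = (T ⊓ Submodule.comap (LinearMap.mulLeft Fq a) (perp Fq S)).map f := by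
      ext ⟨x, y⟩
      simp only [Submodule.mem_inf, Submodule.mem_prod, Submodule.restrictScalars_mem,
        Submodule.mem_map, Submodule.mem_comap, Submodule.mem_span_singleton]
      constructor
      · rintro ⟨⟨hx, hy⟩, c, hc⟩
        rw [Prod.smul_mk, smul_eq_mul, smul_eq_mul, mul_one, Prod.mk.injEq] at hc
        obtain ⟨h1, h2⟩ := hc
        subst h2
        refine ⟨c, ⟨hy, ?_⟩, ?_⟩
        · simp only [LinearMap.mulLeft_apply]
          rw [mul_comm, h1]; exact hx
        · simp only [hf, LinearMap.prod_apply, Function.prod, LinearMap.mulLeft_apply,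
            LinearMap.id_apply, Prod.mk.injEq]
          exact ⟨by rw [mul_comm, h1], trivial⟩
      · rintro ⟨t, ⟨ht, hts⟩, heq⟩
        simp only [hf, LinearMap.prod_apply, Function.prod, LinearMap.mulLeft_apply,
          LinearMap.id_apply, Prod.mk.injEq] at heq hts
        obtain ⟨h1, h2⟩ := heq
        subst h1; subst h2
        exact ⟨⟨hts, ht⟩, t, by
          rw [Prod.smul_mk, smul_eq_mul, smul_eq_mul, mul_one, mul_comm]⟩
    rw [weight, him]
    exact (Submodule.equivMapOfInjective f hfinj _).finrank_eq.symm
  -- weight is r iff a ∈ perp W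
  have hwr : ∀ a : Fqn,
      weight ((perp Fq S).prod T) (Submodule.span Fqn {(a, (1 : Fqn))}) = r ↔
        a ∈ perp Fq W := by
    intro a
    rw [hweight a]
    constructor
    · intro h
      have hle : T ⊓ Submodule.comap (LinearMap.mulLeft Fq a) (perp Fq S) ≤ T :=
        inf_le_left
      have heq := Submodule.eq_of_le_of_finrank_le hle (by rw [h, hT])
      have hTle : T ≤ Submodule.comap (LinearMap.mulLeft Fq a) (perp Fq S) := by
        conv_lhs => rw [← heq]
        exact inf_le_right
      rw [hWmem]
      intro t ht s hs
      have := hTle ht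
      simp only [Submodule.mem_comap, LinearMap.mulLeft_apply] at this
      exact this s hs
    · intro ha
      have heq : T ⊓ Submodule.comap (LinearMap.mulLeft Fq a) (perp Fq S) = T := by
        rw [inf_eq_left]
        intro t ht
        simp only [Submodule.mem_comap, LinearMap.mulLeft_apply]
        intro s hs
        exact (hWmem a).mp ha t ht s hs
      rw [heq, hT]
  -- injectivity of a ↦ ⟨(a,1)⟩
  have hinj : Function.Injective
      (fun a : Fqn => Submodule.span Fqn {(a, (1 : Fqn))}) := by
    intro a b h
    have h' : Submodule.span Fqn {(a, (1 : Fqn))} = Submodule.span Fqn {(b, (1 : Fqn))} := h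
    have hmem : (a, (1 : Fqn)) ∈ Submodule.span Fqn {(b, (1 : Fqn))} := by
      rw [← h']; exact Submodule.mem_span_singleton_self _
    obtain ⟨c, hc⟩ := Submodule.mem_span_singleton.mp hmem
    rw [Prod.smul_mk, smul_eq_mul, smul_eq_mul, mul_one, Prod.mk.injEq] at hc
    obtain ⟨h1, h2⟩ := hc
    subst h2
    rw [one_mul] at h1
    exact h1.symm
  -- ⟨(a,1)⟩ ≠ ⟨(1,0)⟩
  have hne10 : ∀ a : Fqn,
      Submodule.span Fqn {(a, (1 : Fqn))} ≠
        Submodule.span Fqn {((1 : Fqn), (0 : Fqn))} := by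
    intro a h
    have hmem : (a, (1 : Fqn)) ∈ Submodule.span Fqn {((1 : Fqn), (0 : Fqn))} := by
      rw [← h]; exact Submodule.mem_span_singleton_self _
    obtain ⟨c, hc⟩ := Submodule.mem_span_singleton.mp hmem
    have := congrArg Prod.snd hc
    simp at this
  -- the set of weight-r points ≠ ⟨(1,0)⟩ is the image of perp W
  have hsetmem : {P | P ∈ linSet ((perp Fq S).prod T) ∧
        weight ((perp Fq S).prod T) P = r ∧
        P ≠ Submodule.span Fqn {((1 : Fqn), (0 : Fqn))}} =
      (fun a : Fqn => Submodule.span Fqn {(a, (1 : Fqn))}) '' (perp Fq W : Set Fqn) := by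
    ext P
    simp only [Set.mem_setOf_eq, Set.mem_image, SetLike.mem_coe]
    constructor
    · rintro ⟨⟨⟨x, y⟩, hv0, hvU, rfl⟩, hw, hne⟩
      by_cases hy : y = 0
      · subst hy
        exfalso
        apply hne
        have hx : x ≠ 0 := by
          intro h; subst h; exact hv0 rfl
        have hrw : ((x, (0 : Fqn)) : Fqn × Fqn) = x • ((1 : Fqn), (0 : Fqn)) := by
          rw [Prod.smul_mk, smul_eq_mul, smul_eq_mul, mul_one, mul_zero]
        rw [hrw, Submodule.span_singleton_smul_eq (isUnit_iff_ne_zero.mpr hx) _]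
      · have hspan : Submodule.span Fqn {(x, y)} =
            Submodule.span Fqn {(x * y⁻¹, (1 : Fqn))} := by
          have hrw : ((x, y) : Fqn × Fqn) = y • (x * y⁻¹, (1 : Fqn)) := by
            rw [Prod.smul_mk, smul_eq_mul, smul_eq_mul, mul_one, Prod.mk.injEq]
            constructor
            · field_simp
            · rfl
          rw [hrw, Submodule.span_singleton_smul_eq (isUnit_iff_ne_zero.mpr hy) _]
        refine ⟨x * y⁻¹, ?_, hspan.symm⟩
        exact (hwr _).mp (by rw [← hspan]; exact hw)
    · rintro ⟨a, ha, rfl⟩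
      have hTne : T ≠ ⊥ := by
        intro h
        rw [h, finrank_bot] at hT
        omega
      obtain ⟨t0, ht0T, ht00⟩ := (Submodule.ne_bot_iff T).mp hTne
      refine ⟨⟨(a * t0, t0), ?_, ?_, ?_⟩, (hwr a).mpr ha, hne10 a⟩
      · intro h
        exact ht00 (congrArg Prod.snd h)
      · rw [Submodule.mem_prod]
        refine ⟨?_, ht0T⟩
        rw [mem_perp_iff]
        intro s hs
        rw [show a * t0 * s = a * t0 * s from rfl]
        exact (hWmem a).mp ha t0 ht0T s hs
      · have hrw : ((a * t0, t0) : Fqn × Fqn) = t0 • (a, (1 : Fqn)) := by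
          rw [Prod.smul_mk, smul_eq_mul, smul_eq_mul, mul_one, mul_comm]
        rw [hrw, Submodule.span_singleton_smul_eq (isUnit_iff_ne_zero.mpr ht00) _]
    done
  -- count the image
  haveI : Fintype Fqn := Fintype.ofFinite _
  haveI : Fintype ↥(perp Fq W) := Fintype.ofFinite _
  have hcount : Set.ncard {P | P ∈ linSet ((perp Fq S).prod T) ∧
        weight ((perp Fq S).prod T) P = r ∧
        P ≠ Submodule.span Fqn {((1 : Fqn), (0 : Fqn))}} =
      Fintype.card Fq ^ (n - Module.finrank Fq ↥W) := by
    rw [hsetmem, Set.ncard_image_of_injective _ hinj, ← Nat.card_coe_set_eq,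
      SetLike.coe_sort_coe, Nat.card_eq_fintype_card]
    rw [Module.card_eq_pow_finrank (K := Fq) (V := ↥(perp Fq W))]
    congr 1
    rw [hperp, LinearMap.BilinForm.finrank_orthogonal hnd W, hn]
  rw [hcount]
  have hq2 : 2 ≤ Fintype.card Fq := Fintype.one_lt_card
  have hdn : Module.finrank Fq ↥W ≤ n := hn ▸ Submodule.finrank_le W
  constructor
  · intro h
    congr 1
    omega
  · intro h
    have := Nat.pow_right_injective hq2 h
    omega
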